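/- Fix 0 < α ≤ 2 and t > 0. If g : (0,t) → ℂ is measurable with ∫_0^t |g(τ)| τ^α dτ < ∞, then the function z ↦ (L_t^α g)(z) := t^{-α} ∫_0^t K_α(z,t-τ) g(τ) τ^α dτ is holomorphic on the open sector Δ_α. -/

import Mathlib

open MeasureTheory Filter Set Complex

/-- The open sector `Δ_α = {z ≠ 0 : |arg z| < πα/4}`. -/
def sector (α : ℝ) : Set ℂ :=
  {z : ℂ | z ≠ 0 ∧ |Complex.arg z| < Real.pi * α / 4}

/-- The complex kernel `K_α(z,s) = (α^α/(2^α Γ(α/2))) z s^{-(α/2+1)} exp(-α² z^{2/α}/(4s))`,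
where `z^{2/α}` is taken with the principal branch. -/
noncomputable def Kc (α : ℝ) (z : ℂ) (s : ℝ) : ℂ :=
  ((α ^ α / (2 ^ α * Real.Gamma (α / 2)) : ℝ) : ℂ) * z * (((s ^ (-(α / 2 + 1)) : ℝ)) : ℂ) *
    Complex.exp (-(α ^ 2 : ℂ) * z ^ (((2 / α : ℝ)) : ℂ) / (4 * (s : ℂ)))

/-- The transform `(L_t^α g)(z) = t^{-α} ∫_0^t K_α(z,t-τ) g(τ) τ^α dτ`. -/
noncomputable def Lc (α t : ℝ) (g : ℝ → ℂ) (z : ℂ) : ℂ :=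
  ((t ^ (-α) : ℝ) : ℂ) *
    ∫ τ in Set.Ioo (0 : ℝ) t, Kc α z (t - τ) * g τ * ((τ ^ α : ℝ) : ℂ)

noncomputable def Kd (α : ℝ) (z : ℂ) (s : ℝ) : ℂ :=
  ((α ^ α / (2 ^ α * Real.Gamma (α / 2)) : ℝ) : ℂ) * (((s ^ (-(α / 2 + 1)) : ℝ)) : ℂ) *
      Complex.exp (-(α ^ 2 : ℂ) * z ^ (((2 / α : ℝ)) : ℂ) / (4 * (s : ℂ))) +
    ((α ^ α / (2 ^ α * Real.Gamma (α / 2)) : ℝ) : ℂ) * z * (((s ^ (-(α / 2 + 1)) : ℝ)) : ℂ) *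
      (Complex.exp (-(α ^ 2 : ℂ) * z ^ (((2 / α : ℝ)) : ℂ) / (4 * (s : ℂ))) *
        (-(α ^ 2 : ℂ) * ((((2 / α : ℝ)) : ℂ) * z ^ ((((2 / α : ℝ)) : ℂ) - 1)) / (4 * (s : ℂ))))

lemma hasDerivAt_Kc (α : ℝ) (s : ℝ) {z : ℂ} (hz : z ∈ Complex.slitPlane) :
    HasDerivAt (fun z => Kc α z s) (Kd α z s) z := by
  have h1 : HasDerivAt (fun z : ℂ => z ^ (((2 / α : ℝ)) : ℂ))
      ((((2 / α : ℝ)) : ℂ) * z ^ ((((2 / α : ℝ)) : ℂ) - 1)) z :=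
    (Complex.hasStrictDerivAt_cpow_const hz).hasDerivAt
  have h2 := (h1.const_mul (-(α ^ 2 : ℂ))).div_const (4 * (s : ℂ))
  have h3 := h2.cexp
  have h4 : HasDerivAt (fun z : ℂ =>
      ((α ^ α / (2 ^ α * Real.Gamma (α / 2)) : ℝ) : ℂ) * z * (((s ^ (-(α / 2 + 1)) : ℝ)) : ℂ))
      (((α ^ α / (2 ^ α * Real.Gamma (α / 2)) : ℝ) : ℂ) * (((s ^ (-(α / 2 + 1)) : ℝ)) : ℂ)) z := by
    simpa using ((hasDerivAt_id z).const_mul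
      ((α ^ α / (2 ^ α * Real.Gamma (α / 2)) : ℝ) : ℂ)).mul_const (((s ^ (-(α / 2 + 1)) : ℝ)) : ℂ)
  have := h4.fun_mul h3
  simpa [Kc, Kd] using this

lemma bound_aux (t p c : ℝ) (ht : 0 < t) (hc : 0 < c) :
    ∃ B : ℝ, 0 ≤ B ∧ ∀ s : ℝ, 0 < s → s ≤ t → s ^ (-p) * Real.exp (-(c / s)) ≤ B := by
  obtain ⟨n, hn⟩ := exists_nat_ge p
  refine ⟨((Nat.factorial n) : ℝ) / c ^ n * t ^ ((n : ℝ) - p), by positivity, fun s hs hst => ?_⟩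
  have hcs : 0 < c / s := div_pos hc hs
  have h1 : Real.exp (-(c / s)) ≤ ((c / s) ^ n / ((Nat.factorial n) : ℝ))⁻¹ := by
    rw [Real.exp_neg]
    exact inv_anti₀ (by positivity) (Real.pow_div_factorial_le_exp _ hcs.le n)
  have h2 : ((c / s) ^ n / ((Nat.factorial n) : ℝ))⁻¹ = ((Nat.factorial n) : ℝ) / c ^ n * s ^ n := by
    rw [div_pow, inv_div]
    field_simp
  calc s ^ (-p) * Real.exp (-(c / s)) ≤ s ^ (-p) * (((Nat.factorial n) : ℝ) / c ^ n * s ^ n) := by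
        rw [← h2]; exact mul_le_mul_of_nonneg_left h1 (Real.rpow_nonneg hs.le _)
    _ = ((Nat.factorial n) : ℝ) / c ^ n * s ^ ((n : ℝ) - p) := by
        rw [← Real.rpow_natCast s n, mul_left_comm, ← Real.rpow_add hs]; ring_nf
    _ ≤ ((Nat.factorial n) : ℝ) / c ^ n * t ^ ((n : ℝ) - p) := by
        have := Real.rpow_le_rpow hs.le hst (by linarith : (0:ℝ) ≤ (n : ℝ) - p)
        exact mul_le_mul_of_nonneg_left this (by positivity)


lemma sector_re_pos {α : ℝ} (hα2 : α ≤ 2) {z : ℂ} (hz : z ∈ sector α) : 0 < z.re := by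
  obtain ⟨hz0, harg⟩ := hz
  have h : |Complex.arg z| < Real.pi / 2 := by
    refine lt_of_lt_of_le harg ?_
    have := Real.pi_pos
    nlinarith
  rcases Complex.abs_arg_lt_pi_div_two_iff.mp h with h' | h'
  · exact h'
  · exact absurd h' hz0

lemma cpow_ofReal_re {z : ℂ} (hz : z ≠ 0) (r : ℝ) :
    (z ^ ((r : ℝ) : ℂ)).re = Real.exp (Real.log (‖z‖) * r) * Real.cos (Complex.arg z * r) := by
  rw [Complex.cpow_def_of_ne_zero hz, Complex.exp_re]
  congr 1
  · congr 1
    simp [Complex.mul_re, Complex.log_re]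
  · simp [Complex.mul_im, Complex.log_im]

lemma cpow_ofReal_abs {z : ℂ} (hz : z ≠ 0) (r : ℝ) :
    ‖z ^ ((r : ℝ) : ℂ)‖ = Real.exp (Real.log (‖z‖) * r) := by
  rw [Complex.cpow_def_of_ne_zero hz, Complex.norm_exp]
  congr 1
  simp [Complex.mul_re, Complex.log_re]

lemma sector_cpow_re_pos {α : ℝ} (hα : 0 < α) {z : ℂ} (hz : z ∈ sector α) :
    0 < (z ^ (((2 / α : ℝ)) : ℂ)).re := by
  obtain ⟨hz0, harg⟩ := hz
  rw [cpow_ofReal_re hz0]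
  apply mul_pos (Real.exp_pos _)
  apply Real.cos_pos_of_mem_Ioo
  have key : |Complex.arg z * (2 / α)| < Real.pi / 2 := by
    rw [abs_mul, abs_of_pos (by positivity : (0:ℝ) < 2 / α)]
    have h1 : |Complex.arg z| * (2 / α) < Real.pi * α / 4 * (2 / α) :=
      mul_lt_mul_of_pos_right harg (by positivity)
    have h2 : Real.pi * α / 4 * (2 / α) = Real.pi / 2 := by field_simp; ring
    linarith
  rw [abs_lt] at key
  exact ⟨key.1, key.2⟩

lemma exp_term_abs (α : ℝ) (z : ℂ) (s : ℝ) :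
    ‖Complex.exp (-(α ^ 2 : ℂ) * z ^ (((2 / α : ℝ)) : ℂ) / (4 * (s : ℂ)))‖ =
      Real.exp (-(α ^ 2 * (z ^ (((2 / α : ℝ)) : ℂ)).re / (4 * s))) := by
  have h : -(α ^ 2 : ℂ) * z ^ (((2 / α : ℝ)) : ℂ) / (4 * (s : ℂ)) =
      ((-(α ^ 2) / (4 * s) : ℝ) : ℂ) * z ^ (((2 / α : ℝ)) : ℂ) := by
    push_cast; ring
  rw [h, Complex.norm_exp, Complex.re_ofReal_mul]
  ring_nf

lemma Kc_abs (α : ℝ) {s : ℝ} (hs : 0 < s) (z : ℂ) :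
    ‖Kc α z s‖ = |α ^ α / (2 ^ α * Real.Gamma (α / 2))| * ‖z‖ * s ^ (-(α / 2 + 1)) *
      Real.exp (-(α ^ 2 * (z ^ (((2 / α : ℝ)) : ℂ)).re / (4 * s))) := by
  simp only [Kc, norm_mul, Complex.norm_real, Real.norm_eq_abs, exp_term_abs]
  rw [_root_.abs_of_nonneg (Real.rpow_nonneg hs.le _)]

lemma deriv_factor_abs (α : ℝ) {s : ℝ} (hα : 0 < α) (hs : 0 < s) (z : ℂ) :
    ‖-(α ^ 2 : ℂ) * ((((2 / α : ℝ)) : ℂ) * z ^ ((((2 / α : ℝ)) : ℂ) - 1)) / (4 * (s : ℂ))‖ =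
      α ^ 2 * ((2 / α) * ‖z ^ ((((2 / α : ℝ)) : ℂ) - 1)‖) / (4 * s) := by
  simp only [norm_div, norm_mul, norm_neg, norm_pow, Complex.norm_real, Real.norm_eq_abs,
    Complex.norm_ofNat]
  rw [abs_of_pos hα, abs_two, abs_of_pos hs]

lemma Kd_abs_le (α : ℝ) (hα : 0 < α) {s : ℝ} (hs : 0 < s) (z : ℂ) :
    ‖Kd α z s‖ ≤
      |α ^ α / (2 ^ α * Real.Gamma (α / 2))| *
          (s ^ (-(α / 2 + 1)) * Real.exp (-(α ^ 2 * (z ^ (((2 / α : ℝ)) : ℂ)).re / (4 * s)))) +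
        |α ^ α / (2 ^ α * Real.Gamma (α / 2))| * ‖z‖ *
            (α ^ 2 * ((2 / α) * ‖z ^ ((((2 / α : ℝ)) : ℂ) - 1)‖) / 4) *
          (s ^ (-(α / 2 + 2)) * Real.exp (-(α ^ 2 * (z ^ (((2 / α : ℝ)) : ℂ)).re / (4 * s)))) := by
  refine (norm_add_le _ _).trans (le_of_eq ?_)
  simp only [norm_mul, Complex.norm_real, Real.norm_eq_abs, exp_term_abs,
    deriv_factor_abs α hα hs]
  rw [_root_.abs_of_nonneg (Real.rpow_nonneg hs.le _)]
  have hpow : s ^ (-(α / 2 + 2)) = s ^ (-(α / 2 + 1)) * s⁻¹ := by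
    rw [← Real.rpow_neg_one s, ← Real.rpow_add hs]; ring_nf
  rw [hpow]
  field_simp

lemma Kc_meas (α t : ℝ) (z : ℂ) : Measurable (fun τ : ℝ => Kc α z (t - τ)) := by
  unfold Kc
  fun_prop

lemma Kd_meas (α t : ℝ) (z : ℂ) : Measurable (fun τ : ℝ => Kd α z (t - τ)) := by
  unfold Kd
  fun_prop


theorem stmt11 (α t : ℝ) (hα : 0 < α) (hα2 : α ≤ 2) (ht : 0 < t)
    (g : ℝ → ℂ) (hg : Measurable g)
    (hint : IntegrableOn (fun τ => ‖g τ‖ * τ ^ α) (Set.Ioo 0 t)) :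
    DifferentiableOn ℂ (Lc α t g) (sector α) := by
  intro z₀ hz₀
  suffices h : DifferentiableAt ℂ (Lc α t g) z₀ from h.differentiableWithinAt
  -- find a closed ball inside the sector
  have hnbhd : sector α ∈ nhds z₀ := by
    have h1 : ContinuousAt Complex.arg z₀ :=
      Complex.continuousAt_arg (Or.inl (sector_re_pos hα2 hz₀))
    have h2 : ∀ᶠ w in nhds z₀, |Complex.arg w| < Real.pi * α / 4 :=
      (h1.abs).eventually (gt_mem_nhds hz₀.2)
    have h3 : ∀ᶠ w in nhds z₀, w ≠ 0 := eventually_ne_nhds hz₀.1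
    filter_upwards [h2, h3] with w hw2 hw3
    exact ⟨hw3, hw2⟩
  obtain ⟨ε, hε, hball⟩ := Metric.nhds_basis_closedBall.mem_iff.mp hnbhd
  set K := Metric.closedBall z₀ ε with hK
  have hz₀K : z₀ ∈ K := Metric.mem_closedBall_self hε.le
  have hKslit : ∀ z ∈ K, z ∈ Complex.slitPlane := fun z hz =>
    Or.inl (sector_re_pos hα2 (hball hz))
  -- min of re (z ^ (2/α)) and max of |z ^ (2/α - 1)| on K
  have hcont1 : ContinuousOn (fun z : ℂ => (z ^ (((2 / α : ℝ)) : ℂ)).re) K := fun z hz =>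
    (Complex.continuous_re.continuousAt.comp (continuousAt_cpow_const (hKslit z hz))).continuousWithinAt
  have hcont2 : ContinuousOn (fun z : ℂ => ‖z ^ ((((2 / α : ℝ)) : ℂ) - 1)‖) K :=
    fun z hz => (continuous_norm.continuousAt.comp
      (continuousAt_cpow_const (hKslit z hz))).continuousWithinAt
  obtain ⟨w1, hw1K, hw1⟩ := (isCompact_closedBall z₀ ε).exists_isMinOn ⟨z₀, hz₀K⟩ hcont1
  obtain ⟨w2, hw2K, hw2⟩ := (isCompact_closedBall z₀ ε).exists_isMaxOn ⟨z₀, hz₀K⟩ hcont2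
  set m : ℝ := (w1 ^ (((2 / α : ℝ)) : ℂ)).re with hm_def
  have hm : 0 < m := sector_cpow_re_pos hα (hball hw1K)
  set M1 : ℝ := ‖w2 ^ ((((2 / α : ℝ)) : ℂ) - 1)‖ with hM1_def
  have hM1 : 0 ≤ M1 := norm_nonneg _
  set Zb : ℝ := ‖z₀‖ + ε with hZb_def
  have hZb : 0 ≤ Zb := by positivity
  have hZbK : ∀ z ∈ K, ‖z‖ ≤ Zb := by
    intro z hz
    have h := Metric.mem_closedBall.mp hz
    calc ‖z‖ = ‖z₀ + (z - z₀)‖ := by ring_nf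
    _ ≤ ‖z₀‖ + ‖z - z₀‖ := norm_add_le _ _
    _ ≤ ‖z₀‖ + ε := by
        have : ‖z - z₀‖ = dist z z₀ := (dist_eq_norm z z₀).symm
        linarith [this ▸ h]
  set C : ℝ := |α ^ α / (2 ^ α * Real.Gamma (α / 2))| with hC_def
  have hC : 0 ≤ C := abs_nonneg _
  obtain ⟨B1, hB1n, hB1⟩ := bound_aux t (α / 2 + 1) (α ^ 2 * m / 4) ht (by positivity)
  obtain ⟨B2, hB2n, hB2⟩ := bound_aux t (α / 2 + 2) (α ^ 2 * m / 4) ht (by positivity)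
  -- uniform bounds on the kernel and its derivative
  have hexp : ∀ z ∈ K, ∀ s : ℝ, 0 < s →
      Real.exp (-(α ^ 2 * (z ^ (((2 / α : ℝ)) : ℂ)).re / (4 * s))) ≤
        Real.exp (-(α ^ 2 * m / 4 / s)) := by
    intro z hz s hs
    rw [Real.exp_le_exp, neg_le_neg_iff, div_div]
    have := isMinOn_iff.mp hw1 z hz
    gcongr
  have keyKc : ∀ z ∈ K, ∀ s : ℝ, 0 < s → s ≤ t → ‖Kc α z s‖ ≤ C * Zb * B1 := by
    intro z hz s hs hst
    rw [Kc_abs α hs z]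
    calc C * ‖z‖ * s ^ (-(α / 2 + 1)) *
        Real.exp (-(α ^ 2 * (z ^ (((2 / α : ℝ)) : ℂ)).re / (4 * s)))
        ≤ C * Zb * (s ^ (-(α / 2 + 1)) * Real.exp (-(α ^ 2 * m / 4 / s))) := by
          rw [mul_assoc (C * ‖z‖)]
          have h1 := hZbK z hz
          have h2 := hexp z hz s hs
          gcongr
      _ ≤ C * Zb * B1 := by
          have := hB1 s hs hst
          gcongr
  set D : ℝ := C * B1 + C * Zb * (α ^ 2 * ((2 / α) * M1) / 4) * B2 with hD_def
  have keyKd : ∀ z ∈ K, ∀ s : ℝ, 0 < s → s ≤ t → ‖Kd α z s‖ ≤ D := by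
    intro z hz s hs hst
    refine (Kd_abs_le α hα hs z).trans ?_
    have h1 : s ^ (-(α / 2 + 1)) *
        Real.exp (-(α ^ 2 * (z ^ (((2 / α : ℝ)) : ℂ)).re / (4 * s))) ≤ B1 :=
      (mul_le_mul_of_nonneg_left (hexp z hz s hs) (Real.rpow_nonneg hs.le _)).trans
        (hB1 s hs hst)
    have h2 : s ^ (-(α / 2 + 2)) *
        Real.exp (-(α ^ 2 * (z ^ (((2 / α : ℝ)) : ℂ)).re / (4 * s))) ≤ B2 :=
      (mul_le_mul_of_nonneg_left (hexp z hz s hs) (Real.rpow_nonneg hs.le _)).trans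
        (hB2 s hs hst)
    have t2 : C * ‖z‖ *
        (α ^ 2 * ((2 / α) * ‖z ^ ((((2 / α : ℝ)) : ℂ) - 1)‖) / 4) *
        (s ^ (-(α / 2 + 2)) *
          Real.exp (-(α ^ 2 * (z ^ (((2 / α : ℝ)) : ℂ)).re / (4 * s)))) ≤
        C * Zb * (α ^ 2 * ((2 / α) * M1) / 4) * B2 := by
      have hz1 := hZbK z hz
      have hz2 := isMaxOn_iff.mp hw2 z hz
      gcongr
    exact add_le_add (mul_le_mul_of_nonneg_left h1 hC) t2
  -- dominated differentiation under the integral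
  set μ : Measure ℝ := volume.restrict (Set.Ioo (0 : ℝ) t) with hμ_def
  set F : ℂ → ℝ → ℂ := fun z τ => Kc α z (t - τ) * g τ * ((τ ^ α : ℝ) : ℂ) with hF_def
  set F' : ℂ → ℝ → ℂ := fun z τ => Kd α z (t - τ) * g τ * ((τ ^ α : ℝ) : ℂ) with hF'_def
  have hrpow_meas : Measurable fun τ : ℝ => ((τ ^ α : ℝ) : ℂ) := by fun_prop
  have hF_meas : ∀ z : ℂ, AEStronglyMeasurable (F z) μ := fun z =>
    (((Kc_meas α t z).mul hg).mul hrpow_meas).aestronglyMeasurable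
  have hF'_meas : ∀ z : ℂ, AEStronglyMeasurable (F' z) μ := fun z =>
    (((Kd_meas α t z).mul hg).mul hrpow_meas).aestronglyMeasurable
  have hnorm : ∀ z : ℂ, ∀ τ ∈ Set.Ioo (0 : ℝ) t,
      ‖F z τ‖ = ‖Kc α z (t - τ)‖ * (‖g τ‖ * τ ^ α) ∧
      ‖F' z τ‖ = ‖Kd α z (t - τ)‖ * (‖g τ‖ * τ ^ α) := by
    intro z τ hτ
    constructor <;>
    · simp only [hF_def, hF'_def, norm_mul, Complex.norm_real, Real.norm_eq_abs,
        _root_.abs_of_nonneg (Real.rpow_nonneg hτ.1.le α)]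
      ring
  have hs_mem : ∀ τ ∈ Set.Ioo (0 : ℝ) t, 0 < t - τ ∧ t - τ ≤ t := fun τ hτ =>
    ⟨by linarith [hτ.2], by linarith [hτ.1]⟩
  have hF_int : Integrable (F z₀) μ := by
    refine Integrable.mono' (hint.const_mul (C * Zb * B1)) (hF_meas z₀) ?_
    rw [hμ_def, ae_restrict_iff' measurableSet_Ioo]
    filter_upwards with τ hτ
    rw [(hnorm z₀ τ hτ).1]
    have hs := hs_mem τ hτ
    exact mul_le_mul_of_nonneg_right (keyKc z₀ hz₀K _ hs.1 hs.2)
      (mul_nonneg (norm_nonneg _) (Real.rpow_nonneg hτ.1.le _))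
  have h_bound : ∀ᵐ τ ∂μ, ∀ z ∈ Metric.ball z₀ ε, ‖F' z τ‖ ≤ D * (‖g τ‖ * τ ^ α) := by
    rw [hμ_def, ae_restrict_iff' measurableSet_Ioo]
    filter_upwards with τ hτ z hzb
    rw [(hnorm z τ hτ).2]
    have hs := hs_mem τ hτ
    have hzK : z ∈ K := Metric.ball_subset_closedBall hzb
    exact mul_le_mul_of_nonneg_right (keyKd z hzK _ hs.1 hs.2)
      (mul_nonneg (norm_nonneg _) (Real.rpow_nonneg hτ.1.le _))
  have h_diff : ∀ᵐ τ ∂μ, ∀ z ∈ Metric.ball z₀ ε, HasDerivAt (fun z => F z τ) (F' z τ) z := by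
    refine ae_of_all _ fun τ z hzb => ?_
    have hzslit : z ∈ Complex.slitPlane := hKslit z (Metric.ball_subset_closedBall hzb)
    exact ((hasDerivAt_Kc α (t - τ) hzslit).mul_const (g τ)).mul_const ((τ ^ α : ℝ) : ℂ)
  have main := hasDerivAt_integral_of_dominated_loc_of_deriv_le (Metric.ball_mem_nhds z₀ hε)
    (Filter.Eventually.of_forall hF_meas) hF_int (hF'_meas z₀) h_bound
    (hint.const_mul D) h_diff
  have hdiff : DifferentiableAt ℂ
      (fun z => ((t ^ (-α) : ℝ) : ℂ) *
        ∫ τ in Set.Ioo (0 : ℝ) t, Kc α z (t - τ) * g τ * ((τ ^ α : ℝ) : ℂ)) z₀ :=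
    (main.2.differentiableAt).const_mul _
  exact hdiff
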